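/- Let f, g be proper convex functions on X with dom f ⊆ dom g, g evenly convex. Then for all x*, y* ∈ X* and α ∈ ℝ: (f − g)^c(−x*,−y*,α) = sup_{(u*,v*,γ) ∈ dom g^c} { f^c(u* − x*, −y*, α) − g^c(u*,v*,γ) }. -/

import Mathlib

noncomputable section
open Classical

/-- The space `W = X* × X* × ℝ` of the c-conjugation scheme. -/
abbrev W (X : Type*) [AddCommGroup X] [Module ℝ X] [TopologicalSpace X] : Type _ :=
  (X →L[ℝ] ℝ) × (X →L[ℝ] ℝ) × ℝ

variable {X : Type*} [AddCommGroup X] [Module ℝ X] [TopologicalSpace X]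

/-- The coupling function `c(x,(x*,y*,α)) = ⟨x,x*⟩` if `⟨x,y*⟩ < α`, `+∞` otherwise. -/
def cpl (x : X) (w : W X) : EReal :=
  if w.2.1 x < w.2.2 then ((w.1 x : ℝ) : EReal) else ⊤

/-- The c-conjugate `f^c(w) = sup_x { c(x,w) − f(x) }`. -/
def cConj (f : X → EReal) (w : W X) : EReal := ⨆ x : X, cpl x w - f x

/-- The c'-conjugate `h^{c'}(x) = sup_w { c'(w,x) − h(w) }`. -/
def cpConj (h : W X → EReal) (x : X) : EReal := ⨆ w : W X, cpl x w - h w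

/-- Subtraction with the DC convention `(+∞) − (+∞) = +∞`. -/
def dcSub (a b : EReal) : EReal := if a = ⊤ then ⊤ else a - b

/-- Indicator function `δ_A`. -/
def indic (A : Set X) (x : X) : EReal := if x ∈ A then (0 : EReal) else ⊤

/-- Epigraph of a function on `W`. -/
def epiW (h : W X → EReal) : Set (W X × ℝ) := {p | h p.1 ≤ (p.2 : EReal)}

/-- Effective domain. -/
def domE {α : Type*} (f : α → EReal) : Set α := {x | f x ≠ ⊤}

/-- The inner expression of the Fenchel-type dual problems. -/
def dualExpr (f g : X → EReal) (A : Set X) (z w : W X) : EReal :=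
  cConj g w - cConj f (w.1 - z.1, -z.2.1, z.2.2) - cConj (indic A) z

/-- The set `Z = X* × X* × ℝ_{++}`. -/
def Zset (X : Type*) [AddCommGroup X] [Module ℝ X] [TopologicalSpace X] : Set (W X) :=
  {z | 0 < z.2.2}

/-- Primal optimal value `v(P) = inf_X { f − g + δ_A }`. -/
def vP (f g : X → EReal) (A : Set X) : EReal := ⨅ x : X, dcSub (f x) (g x) + indic A x

/-- Dual optimal value `v(D^F)`. -/
def vDF (f g : X → EReal) (A : Set X) : EReal :=
  ⨆ z ∈ Zset X, ⨅ w ∈ domE (cConj g), dualExpr f g A z w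

/-- Dual optimal value `v(D̄^F)`. -/
def vDbarF (f g : X → EReal) (A : Set X) : EReal :=
  ⨅ w ∈ domE (cConj g), ⨆ z ∈ Zset X, dualExpr f g A z w

/-- The set `Ω`. -/
def OmegaSet (f g : X → EReal) (A : Set X) : Set (W X × ℝ) :=
  ⋃ z ∈ domE (cConj (indic A)), ⋂ w ∈ domE (cConj g),
    (fun p : W X × ℝ =>
        p - ((w.1, 0, 0), (cConj g w).toReal - (cConj (indic A) z).toReal)) ''
      epiW (cConj (fun x => dcSub (f x) (cpl x (-z.1, -z.2.1, z.2.2))))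

/-- The set `K`. -/
def Kset (f g : X → EReal) (A : Set X) : Set (W X × ℝ) :=
  ⋂ w ∈ domE (cConj g), ⋃ z ∈ domE (cConj (indic A)),
    (fun p : W X × ℝ =>
        p - ((w.1, 0, 0), (cConj g w).toReal - (cConj (indic A) z).toReal)) ''
      epiW (cConj (fun x => dcSub (f x) (cpl x (-z.1, -z.2.1, z.2.2))))

/-- The set `B = {(0,0)} × ℝ_{++} × ℝ`. -/
def Bset (X : Type*) [AddCommGroup X] [Module ℝ X] [TopologicalSpace X] :
    Set (W X × ℝ) :=
  {p | p.1.1 = 0 ∧ p.1.2.1 = 0 ∧ 0 < p.1.2.2}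

/-- Properness of an extended-real-valued function. -/
def ProperFn {α : Type*} (f : α → EReal) : Prop := (∀ x, f x ≠ ⊥) ∧ ∃ x, f x ≠ ⊤

/-- Convexity of an extended-real-valued function via its epigraph. -/
def ConvexFn (f : X → EReal) : Prop := Convex ℝ {p : X × ℝ | f p.1 ≤ (p.2 : EReal)}

/-- Evenly convex set. -/
def EvenlyConvexSet {Y : Type*} [AddCommGroup Y] [Module ℝ Y] [TopologicalSpace Y]
    (C : Set Y) : Prop :=
  ∀ y0 ∉ C, ∃ φ : Y →L[ℝ] ℝ, ∀ y ∈ C, φ (y - y0) < 0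

/-- Evenly convex function: its epigraph is an evenly convex subset of `X × ℝ`. -/
def EConvexFn (f : X → EReal) : Prop :=
  EvenlyConvexSet {p : X × ℝ | f p.1 ≤ (p.2 : EReal)}


lemma exists_real_of {e : EReal} (h1 : e ≠ ⊤) (h2 : e ≠ ⊥) : ∃ r : ℝ, e = (r : EReal) :=
  ⟨e.toReal, (EReal.coe_toReal h1 h2).symm⟩

/-- Key separation lemma from even convexity: at a point of the domain, strict
minorization yields a `c`-affine minorant. -/
lemma key_sep {X : Type*} [AddCommGroup X] [Module ℝ X] [TopologicalSpace X]
    (g : X → EReal) (hg : ProperFn g) (hge : EConvexFn g)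
    {x0 : X} (hx0 : g x0 ≠ ⊤) {r : ℝ} (hr : (r : EReal) < g x0) :
    ∃ u : X →L[ℝ] ℝ, ∀ x : X, cpl x ((u, 0, 1) : W X) - g x ≤ ((u x0 - r : ℝ) : EReal) := by
  obtain ⟨s0, hs0⟩ := exists_real_of hx0 (hg.1 x0)
  rw [hs0] at hr
  have hrs0 : r < s0 := by exact_mod_cast hr
  have hnot : ((x0, r) : X × ℝ) ∉ {p : X × ℝ | g p.1 ≤ (p.2 : EReal)} := by
    simp only [Set.mem_setOf_eq, hs0, not_le]
    exact_mod_cast hrs0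
  obtain ⟨φ, hφ⟩ := hge (x0, r) hnot
  set lam : ℝ := φ ((0 : X), (1 : ℝ)) with hlamdef
  have h1 : ((x0, s0) : X × ℝ) ∈ {p : X × ℝ | g p.1 ≤ (p.2 : EReal)} := by
    simp [Set.mem_setOf_eq, hs0]
  have h2 := hφ (x0, s0) h1
  have hdec1 : ((x0, s0) : X × ℝ) - (x0, r) = (s0 - r) • ((0 : X), (1 : ℝ)) := by
    simp [Prod.ext_iff]
  rw [hdec1, map_smul, smul_eq_mul, ← hlamdef] at h2
  have hlam : lam < 0 := by
    have hsr : 0 < s0 - r := by linarith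
    by_contra hle
    push_neg at hle
    nlinarith [h2]
  set u : X →L[ℝ] ℝ := (-lam)⁻¹ • (φ.comp (ContinuousLinearMap.inl ℝ X ℝ)) with hudef
  have hux : ∀ x : X, u x = (-lam)⁻¹ * φ ((x, 0) : X × ℝ) := by
    intro x
    simp [hudef]
  refine ⟨u, fun x => ?_⟩
  by_cases hx : g x = ⊤
  · rw [hx, EReal.sub_top]; exact bot_le
  · obtain ⟨s, hs⟩ := exists_real_of hx (hg.1 x)
    have hmem : ((x, s) : X × ℝ) ∈ {p : X × ℝ | g p.1 ≤ (p.2 : EReal)} := by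
      simp [Set.mem_setOf_eq, hs]
    have h3 := hφ (x, s) hmem
    have hdec2 : ((x, s) : X × ℝ) - (x0, r)
        = (((x, 0) : X × ℝ) - ((x0, 0) : X × ℝ)) + (s - r) • ((0 : X), (1 : ℝ)) := by
      simp [Prod.ext_iff]
    rw [hdec2, map_add, map_sub, map_smul, smul_eq_mul, ← hlamdef] at h3
    -- h3 : φ (x,0) - φ (x0,0) + (s - r) * lam < 0
    have hpos : 0 < -lam := by linarith
    have hinv : (-lam)⁻¹ * (-lam) = 1 := inv_mul_cancel₀ (ne_of_gt hpos)
    have hreal : u x - s ≤ u x0 - r := by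
      rw [hux x, hux x0]
      have hlne : lam ≠ 0 := ne_of_lt hlam
      have h5 : (-lam)⁻¹ * ((s - r) * lam) = -(s - r) := by
        field_simp
      have h4 := mul_lt_mul_of_pos_left h3 (inv_pos.2 hpos)
      rw [mul_zero, mul_add, mul_sub, h5] at h4
      linarith
    have hcpl : cpl x ((u, 0, 1) : W X) = ((u x : ℝ) : EReal) := by
      simp [cpl]
    rw [hcpl, hs, ← EReal.coe_sub]
    exact_mod_cast hreal

/-- On the domain of `g`, the coupling with any `w ∈ dom g^c` is finite. -/
lemma cpl_eq_of_mem {X : Type*} [AddCommGroup X] [Module ℝ X] [TopologicalSpace X]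
    (g : X → EReal) (hg : ProperFn g) {x : X} (hx : g x ≠ ⊤)
    {w : W X} (hw : cConj g w ≠ ⊤) :
    cpl x w = ((w.1 x : ℝ) : EReal) := by
  obtain ⟨b, hb⟩ := exists_real_of hx (hg.1 x)
  by_cases hc : w.2.1 x < w.2.2
  · simp [cpl, hc]
  · exfalso
    apply hw
    have hterm : cpl x w - g x = ⊤ := by
      simp [cpl, hc, hb, EReal.top_sub_coe]
    have := le_iSup (fun x' => cpl x' w - g x') x
    rw [hterm] at this
    exact top_le_iff.1 this

/-- Existence of dual elements with value control, from even convexity. -/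
lemma exists_dual {X : Type*} [AddCommGroup X] [Module ℝ X] [TopologicalSpace X]
    (g : X → EReal) (hg : ProperFn g) (hge : EConvexFn g)
    {x0 : X} (hx0 : g x0 ≠ ⊤) {r : ℝ} (hr : (r : EReal) < g x0) :
    ∃ w : W X, ∃ c : ℝ, cConj g w = (c : EReal) ∧ r ≤ w.1 x0 - c := by
  obtain ⟨u, hu⟩ := key_sep g hg hge hx0 hr
  obtain ⟨s0, hs0⟩ := exists_real_of hx0 (hg.1 x0)
  have hub : cConj g ((u, 0, 1) : W X) ≤ ((u x0 - r : ℝ) : EReal) := iSup_le hu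
  have hlb : ((u x0 - s0 : ℝ) : EReal) ≤ cConj g ((u, 0, 1) : W X) := by
    have h := le_iSup (fun x' => cpl x' ((u, 0, 1) : W X) - g x') x0
    have hcpl : cpl x0 ((u, 0, 1) : W X) = ((u x0 : ℝ) : EReal) := by simp [cpl]
    rw [hcpl, hs0, ← EReal.coe_sub] at h
    exact h
  have hnt : cConj g ((u, 0, 1) : W X) ≠ ⊤ := by
    intro h; rw [h] at hub; exact (EReal.coe_lt_top _).not_ge hub
  have hnb : cConj g ((u, 0, 1) : W X) ≠ ⊥ := by
    intro h; rw [h] at hlb; exact (EReal.bot_lt_coe _).not_ge hlb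
  obtain ⟨c, hc⟩ := exists_real_of hnt hnb
  refine ⟨(u, 0, 1), c, hc, ?_⟩
  rw [hc] at hub
  have : c ≤ u x0 - r := by exact_mod_cast hub
  linarith

/-- If `f, g` are proper convex, `dom f ⊆ dom g` and `g` is evenly convex, then
`(f − g)^c(−x*,−y*,α) = sup_{(u*,v*,γ) ∈ dom g^c} { f^c(u*−x*,−y*,α) − g^c(u*,v*,γ) }`. -/
theorem cConj_dc_formula
    {X : Type*} [AddCommGroup X] [Module ℝ X] [TopologicalSpace X]
    (f g : X → EReal)
    (hf : ProperFn f) (hfc : ConvexFn f) (hg : ProperFn g) (hgc : ConvexFn g)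
    (hge : EConvexFn g) (hdom : domE f ⊆ domE g)
    (xs ys : X →L[ℝ] ℝ) (α : ℝ) :
    cConj (fun x => dcSub (f x) (g x)) (-xs, -ys, α) =
      ⨆ w ∈ domE (cConj g), (cConj f (w.1 - xs, -ys, α) - cConj g w) := by
  apply le_antisymm
  · -- LHS ≤ RHS
    refine iSup_le fun x => ?_
    show cpl x ((-xs, -ys, α) : W X) - dcSub (f x) (g x) ≤ _
    by_cases hfx : f x = ⊤
    · have hdc : dcSub (f x) (g x) = ⊤ := by simp [dcSub, hfx]
      rw [hdc, EReal.sub_top]; exact bot_le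
    · obtain ⟨a, ha⟩ := exists_real_of hfx (hf.1 x)
      have hgx : g x ≠ ⊤ := hdom hfx
      obtain ⟨b, hb⟩ := exists_real_of hgx (hg.1 x)
      have hdc : dcSub (f x) (g x) = ((a - b : ℝ) : EReal) := by
        rw [dcSub, if_neg hfx, ha, hb, ← EReal.coe_sub]
      by_cases hyc : (-ys) x < α
      · -- finite coupling case
        have hcpl : cpl x ((-xs, -ys, α) : W X) = (((-xs) x : ℝ) : EReal) := by
          simp only [cpl, if_pos hyc]
        rw [hcpl, hdc, ← EReal.coe_sub]
        by_contra hcon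
        push_neg at hcon
        obtain ⟨y, hy1, hy2⟩ := EReal.exists_between_coe_real hcon
        have hy2' : y < (-xs) x - (a - b) := by exact_mod_cast hy2
        set r : ℝ := y - (-xs) x + a with hrdef
        have hrb : (r : EReal) < g x := by
          rw [hb]; exact_mod_cast (by linarith : r < b)
        obtain ⟨w, c, hc, hrc⟩ := exists_dual g hg hge hgx hrb
        have h1 : cpl x ((w.1 - xs, -ys, α) : W X) = ((w.1 x - xs x : ℝ) : EReal) := by
          simp only [cpl, if_pos hyc, ContinuousLinearMap.sub_apply]
        have h2 : ((w.1 x - xs x - a : ℝ) : EReal) ≤ cConj f (w.1 - xs, -ys, α) := by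
          have h := le_iSup (fun x' => cpl x' ((w.1 - xs, -ys, α) : W X) - f x') x
          rw [h1, ha, ← EReal.coe_sub] at h
          exact h
        have h3 : ((w.1 x - xs x - a - c : ℝ) : EReal)
            ≤ cConj f (w.1 - xs, -ys, α) - cConj g w := by
          rw [hc]
          calc ((w.1 x - xs x - a - c : ℝ) : EReal)
              = ((w.1 x - xs x - a : ℝ) : EReal) - (c : ℝ) := by
                rw [← EReal.coe_sub]
            _ ≤ cConj f (w.1 - xs, -ys, α) - (c : ℝ) := by
                exact EReal.sub_le_sub h2 le_rfl
        have hy3 : ((y : ℝ) : EReal) ≤ cConj f (w.1 - xs, -ys, α) - cConj g w := by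
          refine le_trans ?_ h3
          have hxs : (-xs) x = -(xs x) := by simp
          rw [hxs] at hy2' hrdef
          exact_mod_cast (by rw [hrdef] at hrc; linarith : y ≤ w.1 x - xs x - a - c)
        have hmem : w ∈ domE (cConj g) := by
          intro h; rw [hc] at h; exact EReal.coe_ne_top c h
        have : ((y : ℝ) : EReal) ≤ ⨆ w ∈ domE (cConj g),
            (cConj f (w.1 - xs, -ys, α) - cConj g w) :=
          le_iSup₂_of_le w hmem hy3
        exact absurd (lt_of_le_of_lt this hy1) (lt_irrefl _)
      · -- infinite coupling case
        have hcpl : cpl x ((-xs, -ys, α) : W X) = ⊤ := by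
          simp only [cpl, if_neg hyc]
        rw [hcpl, hdc, EReal.top_sub_coe]
        have hrb : ((b - 1 : ℝ) : EReal) < g x := by
          rw [hb]; exact_mod_cast (by linarith : b - 1 < b)
        obtain ⟨w, c, hc, -⟩ := exists_dual g hg hge hgx hrb
        have hmem : w ∈ domE (cConj g) := by
          intro h; rw [hc] at h; exact EReal.coe_ne_top c h
        refine le_iSup₂_of_le w hmem ?_
        have h1 : cpl x ((w.1 - xs, -ys, α) : W X) = ⊤ := by
          simp only [cpl, if_neg hyc]
        have hfc : cConj f (w.1 - xs, -ys, α) = ⊤ := by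
          have h := le_iSup (fun x' => cpl x' ((w.1 - xs, -ys, α) : W X) - f x') x
          rw [h1, ha, EReal.top_sub_coe] at h
          exact top_le_iff.1 h
        rw [hfc, hc, EReal.top_sub_coe]
  · -- RHS ≤ LHS
    refine iSup₂_le fun w hw => ?_
    obtain ⟨x1, hx1⟩ := hg.2
    obtain ⟨b1, hb1⟩ := exists_real_of hx1 (hg.1 x1)
    have hcx1 : cpl x1 w = ((w.1 x1 : ℝ) : EReal) := cpl_eq_of_mem g hg hx1 hw
    have hlb : ((w.1 x1 - b1 : ℝ) : EReal) ≤ cConj g w := by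
      have h := le_iSup (fun x' => cpl x' w - g x') x1
      rw [hcx1, hb1, ← EReal.coe_sub] at h
      exact h
    have hnb : cConj g w ≠ ⊥ := by
      intro h; rw [h] at hlb; exact (EReal.bot_lt_coe _).not_ge hlb
    obtain ⟨c, hc⟩ := exists_real_of hw hnb
    rw [hc]
    rw [EReal.sub_le_iff_le_add (Or.inl (EReal.coe_ne_bot c)) (Or.inl (EReal.coe_ne_top c))]
    refine iSup_le fun x => ?_
    show cpl x ((w.1 - xs, -ys, α) : W X) - f x ≤ _
    by_cases hfx : f x = ⊤
    · rw [hfx, EReal.sub_top]; exact bot_le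
    · obtain ⟨a, ha⟩ := exists_real_of hfx (hf.1 x)
      have hgx : g x ≠ ⊤ := hdom hfx
      obtain ⟨b, hb⟩ := exists_real_of hgx (hg.1 x)
      have hdc : dcSub (f x) (g x) = ((a - b : ℝ) : EReal) := by
        rw [dcSub, if_neg hfx, ha, hb, ← EReal.coe_sub]
      have hcx : cpl x w = ((w.1 x : ℝ) : EReal) := cpl_eq_of_mem g hg hgx hw
      have hwb : ((w.1 x - b : ℝ) : EReal) ≤ (c : EReal) := by
        rw [← hc]
        have h := le_iSup (fun x' => cpl x' w - g x') x
        rw [hcx, hb, ← EReal.coe_sub] at h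
        exact h
      have hwb' : w.1 x - b ≤ c := by exact_mod_cast hwb
      by_cases hyc : (-ys) x < α
      · have h1 : cpl x ((w.1 - xs, -ys, α) : W X) = ((w.1 x - xs x : ℝ) : EReal) := by
          simp only [cpl, if_pos hyc, ContinuousLinearMap.sub_apply]
        rw [h1, ha, ← EReal.coe_sub]
        have hL : (((-xs) x - (a - b) : ℝ) : EReal)
            ≤ cConj (fun x' => dcSub (f x') (g x')) (-xs, -ys, α) := by
          have h := le_iSup
            (fun x' => cpl x' ((-xs, -ys, α) : W X) - dcSub (f x') (g x')) x
          have hcpl : cpl x ((-xs, -ys, α) : W X) = (((-xs) x : ℝ) : EReal) := by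
            simp only [cpl, if_pos hyc]
          rw [hcpl, hdc, ← EReal.coe_sub] at h
          exact h
        calc ((w.1 x - xs x - a : ℝ) : EReal)
            ≤ (((-xs) x - (a - b) + c : ℝ) : EReal) := by
              have hxs : (-xs) x = -(xs x) := by simp
              exact_mod_cast (by rw [hxs]; linarith : w.1 x - xs x - a ≤ (-xs) x - (a - b) + c)
          _ = (((-xs) x - (a - b) : ℝ) : EReal) + (c : ℝ) := by rw [← EReal.coe_add]
          _ ≤ cConj (fun x' => dcSub (f x') (g x')) (-xs, -ys, α) + (c : ℝ) :=
              add_le_add_left hL _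
      · have h1 : cpl x ((w.1 - xs, -ys, α) : W X) = ⊤ := by
          simp only [cpl, if_neg hyc]
        have hLtop : cConj (fun x' => dcSub (f x') (g x')) (-xs, -ys, α) = ⊤ := by
          have h := le_iSup
            (fun x' => cpl x' ((-xs, -ys, α) : W X) - dcSub (f x') (g x')) x
          have hcpl : cpl x ((-xs, -ys, α) : W X) = ⊤ := by
            simp only [cpl, if_neg hyc]
          rw [hcpl, hdc, EReal.top_sub_coe] at h
          exact top_le_iff.1 h
        rw [hLtop, EReal.top_add_coe]
        exact le_top
end
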